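/- arXiv:math/0702495 — 2 statements merged into one kernel-verified Lean document; each statement's English description precedes it below -/
import Mathlib

section
/- For a strictly increasing homeomorphism f of ℝ, the following are equivalent: (i) f is strongly reversible in H(ℝ), i.e., there is an involution σ among the homeomorphisms of ℝ with σ ∘ f ∘ σ = f⁻¹; (ii) there is a strictly decreasing homeomorphism h of ℝ with Γ_f(x) = Γ_f(h(x)) for all x ∈ ℝ; (iii) there is a homeomorphism k of ℝ such that g = k ∘ f ∘ k⁻¹ satisfies η ∘ g ∘ η = g⁻¹, where η(x) = −x; (iv) f is conjugate in H(ℝ) to a homeomorphism g whose graph is symmetric across the line y = −x, i.e., g(−g(x)) = −x for all x ∈ ℝ. -/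
set_option linter.unusedSectionVars false

/-- `f` is a homeomorphism of `ℝ`: a bijection of `ℝ` that is continuous in both directions. -/
def IsHomeo (f : Equiv.Perm ℝ) : Prop := Continuous f ∧ Continuous f.symm

/-- The signature Γ_f of a map `f : ℝ → ℝ`: `1`, `0` or `-1` according as `f x > x`,
`f x = x` or `f x < x`. -/
noncomputable def signature (f : ℝ → ℝ) (x : ℝ) : ℝ :=
  if x < f x then 1 else if f x = x then 0 else -1

theorem Equiv.Perm.apply_inv_self {α : Type*} (f : Equiv.Perm α) (x : α) : f (f⁻¹ x) = x :=
  f.apply_symm_apply x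

theorem Equiv.Perm.inv_apply_self {α : Type*} (f : Equiv.Perm α) (x : α) : f⁻¹ (f x) = x :=
  f.symm_apply_apply x

namespace Stmt17

open Filter Set

lemma symm_strictMono {e : Equiv.Perm ℝ} (he : StrictMono ⇑e) : StrictMono ⇑e.symm := by
  intro x y hxy
  rw [← he.lt_iff_lt]
  simpa using hxy

lemma symm_strictAnti {e : Equiv.Perm ℝ} (he : StrictAnti ⇑e) : StrictAnti ⇑e.symm := by
  intro x y hxy
  rw [← he.lt_iff_gt]
  simpa using hxy

lemma continuous_of_strictMono (e : Equiv.Perm ℝ) (he : StrictMono ⇑e) : Continuous ⇑e :=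
  he.monotone.continuous_of_surjective e.surjective

lemma continuous_of_strictAnti (e : Equiv.Perm ℝ) (he : StrictAnti ⇑e) : Continuous ⇑e := by
  have hm : StrictMono (fun x => -(e x)) := fun a b h => neg_lt_neg (he h)
  have hsurj : Function.Surjective (fun x => -(e x)) := fun y => ⟨e.symm (-y), by simp⟩
  have h1 : Continuous (fun x => -(e x)) := hm.monotone.continuous_of_surjective hsurj
  have h2 : Continuous (fun x => -(-(e x))) := h1.neg
  simpa using h2

lemma isHomeo_of_strictMono (e : Equiv.Perm ℝ) (he : StrictMono ⇑e) : IsHomeo e :=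
  ⟨continuous_of_strictMono e he, continuous_of_strictMono e.symm (symm_strictMono he)⟩

lemma isHomeo_of_strictAnti (e : Equiv.Perm ℝ) (he : StrictAnti ⇑e) : IsHomeo e :=
  ⟨continuous_of_strictAnti e he, continuous_of_strictAnti e.symm (symm_strictAnti he)⟩

lemma strictMono_or_strictAnti (e : Equiv.Perm ℝ) (hc : Continuous ⇑e) :
    StrictMono ⇑e ∨ StrictAnti ⇑e :=
  hc.strictMono_of_inj e.injective

/-- a strictly monotone involution is the identity -/
lemma eq_one_of_involutive_strictMono {e : Equiv.Perm ℝ} (he : StrictMono ⇑e)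
    (h2 : e * e = 1) : e = 1 := by
  ext x
  rcases lt_trichotomy (e x) x with h | h | h
  · have := he h
    have hxx : (e * e) x = x := by rw [h2]; rfl
    rw [Equiv.Perm.mul_apply] at hxx
    rw [hxx] at this
    exact absurd (this.trans h) (lt_irrefl x)
  · simpa using h
  · have := he h
    have hxx : (e * e) x = x := by rw [h2]; rfl
    rw [Equiv.Perm.mul_apply] at hxx
    rw [hxx] at this
    exact absurd (h.trans this) (lt_irrefl x)

/-- a strictly monotone map with `f ∘ f = id` is the identity. -/
lemma eq_one_of_sq_eq_one_strictMono {f : Equiv.Perm ℝ} (hf : StrictMono ⇑f)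
    (h : f = f⁻¹) : f = 1 := by
  apply eq_one_of_involutive_strictMono hf
  nth_rewrite 2 [h]
  simp




open scoped Classical in
noncomputable def NN (f : Equiv.Perm ℝ) (a x : ℝ) : ℤ :=
  if h : ∃ n : ℤ, (f ^ n) a ≤ x ∧ x < (f ^ (n + 1)) a then h.choose else 0

noncomputable def psi (f : Equiv.Perm ℝ) (a x : ℝ) : ℝ :=
  NN f a x + ((f ^ (-(NN f a x))) x - a) / (f a - a)

noncomputable def psiInv (f : Equiv.Perm ℝ) (a t : ℝ) : ℝ :=
  (f ^ (⌊t⌋)) (a + (t - ⌊t⌋) * (f a - a))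

section Builder

variable {f : Equiv.Perm ℝ} {S : Set ℝ} {a : ℝ}

lemma zpow_succ_apply (f : Equiv.Perm ℝ) (n : ℤ) (x : ℝ) :
    (f ^ (n + 1)) x = f ((f ^ n) x) := by
  rw [add_comm, zpow_add, zpow_one, Equiv.Perm.mul_apply]

lemma zpow_pred_apply (f : Equiv.Perm ℝ) (n : ℤ) (x : ℝ) :
    (f ^ (n - 1)) x = f⁻¹ ((f ^ n) x) := by
  rw [sub_eq_add_neg, add_comm, zpow_add, zpow_neg_one, Equiv.Perm.mul_apply]

lemma zpow_neg_cancel_apply (f : Equiv.Perm ℝ) (n : ℤ) (x : ℝ) :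
    (f ^ (-n)) ((f ^ n) x) = x := by
  rw [← Equiv.Perm.mul_apply, ← zpow_add]
  simp

lemma zpow_cancel_neg_apply (f : Equiv.Perm ℝ) (n : ℤ) (x : ℝ) :
    (f ^ n) ((f ^ (-n)) x) = x := by
  rw [← Equiv.Perm.mul_apply, ← zpow_add]
  simp

lemma strictMono_zpow (hm : StrictMono ⇑f) (n : ℤ) : StrictMono ⇑(f ^ n) := by
  induction n using Int.induction_on with
  | zero => simpa using strictMono_id
  | succ k ih => intro x y hxy; rw [zpow_succ_apply, zpow_succ_apply]; exact hm (ih hxy)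
  | pred k ih =>
      intro x y hxy
      rw [show (-(k:ℤ) - 1) = (-(k:ℤ)) - 1 by ring, zpow_pred_apply, zpow_pred_apply]
      exact symm_strictMono hm (ih hxy)

variable (hm : StrictMono ⇑f) (hS : S.OrdConnected) (hmov : ∀ x ∈ S, x < f x)
  (hfS : ∀ x ∈ S, f x ∈ S) (hf'S : ∀ x ∈ S, f⁻¹ x ∈ S) (ha : a ∈ S)

lemma zpow_apply_zpow (f : Equiv.Perm ℝ) (i j : ℤ) (x : ℝ) :
    (f ^ i) ((f ^ j) x) = (f ^ (i + j)) x := by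
  rw [← Equiv.Perm.mul_apply, ← zpow_add]

include hfS hf'S in
lemma zpow_mem' (n : ℤ) (x : ℝ) (hx : x ∈ S) : (f ^ n) x ∈ S := by
  induction n using Int.induction_on with
  | zero => simpa using hx
  | succ k ih => rw [zpow_succ_apply]; exact hfS _ ih
  | pred k ih => rw [show (-(k:ℤ) - 1) = (-(k:ℤ)) - 1 by ring, zpow_pred_apply]; exact hf'S _ ih

include hfS hf'S ha in
lemma zpow_mem (n : ℤ) : (f ^ n) a ∈ S := zpow_mem' hfS hf'S n a ha

include hmov hfS hf'S ha in
lemma orbit_strictMono : StrictMono (fun n : ℤ => (f ^ n) a) := by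
  apply strictMono_int_of_lt_succ
  intro n
  simp only [zpow_succ_apply]
  exact hmov _ (zpow_mem hfS hf'S ha n)

include hm hS hmov hfS hf'S ha in
lemma exists_orbit_gt (hc : Continuous ⇑f) : ∀ x ∈ S, ∃ n : ℤ, x < (f ^ n) a := by
  intro x hx
  by_contra hcon
  push_neg at hcon
  set o : ℕ → ℝ := fun n => (f ^ (n : ℤ)) a with ho
  have hmono : Monotone o := fun i j hij =>
    ((orbit_strictMono hmov hfS hf'S ha).monotone (by exact_mod_cast hij))
  have hbdd : BddAbove (Set.range o) := ⟨x, by rintro _ ⟨n, rfl⟩; exact hcon _⟩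
  set s := ⨆ n, o n with hs
  have hts : Tendsto o atTop (nhds s) := tendsto_atTop_ciSup hmono hbdd
  have h1 : Tendsto (fun n => o (n + 1)) atTop (nhds s) :=
    hts.comp (tendsto_add_atTop_nat 1)
  have h2 : Tendsto (fun n => o (n + 1)) atTop (nhds (f s)) := by
    have he : (fun n => o (n + 1)) = fun n => f (o n) := by
      funext n
      simp only [ho]
      have hcast : ((n + 1 : ℕ) : ℤ) = (n : ℤ) + 1 := by push_cast; ring
      rw [hcast, zpow_succ_apply]
    rw [he]
    exact (hc.tendsto s).comp hts
  have hfs : f s = s := tendsto_nhds_unique h2 h1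
  have hsS : s ∈ S := by
    have h00 : o 0 = a := by simp [ho]
    have h0 : a ≤ s := h00 ▸ le_ciSup hbdd 0
    have h1 : s ≤ x := ciSup_le fun n => hcon _
    exact hS.out ha hx ⟨h0, h1⟩
  exact absurd hfs (ne_of_gt (hmov s hsS))

include hm hS hmov hfS hf'S ha in
lemma exists_orbit_le (hc' : Continuous ⇑f⁻¹) : ∀ x ∈ S, ∃ n : ℤ, (f ^ n) a ≤ x := by
  intro x hx
  by_contra hcon
  push_neg at hcon
  set o : ℕ → ℝ := fun n => (f ^ (-(n : ℤ))) a with ho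
  have hanti : Antitone o := fun i j hij =>
    ((orbit_strictMono hmov hfS hf'S ha).monotone (neg_le_neg (by exact_mod_cast hij)))
  have hbdd : BddBelow (Set.range o) := ⟨x, by rintro _ ⟨n, rfl⟩; exact (hcon _).le⟩
  set s := ⨅ n, o n with hs
  have hts : Tendsto o atTop (nhds s) := tendsto_atTop_ciInf hanti hbdd
  have h1 : Tendsto (fun n => o (n + 1)) atTop (nhds s) :=
    hts.comp (tendsto_add_atTop_nat 1)
  have h2 : Tendsto (fun n => o (n + 1)) atTop (nhds (f⁻¹ s)) := by
    have he : (fun n => o (n + 1)) = fun n => f⁻¹ (o n) := by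
      funext n
      simp only [ho]
      have hcast : (-((n + 1 : ℕ) : ℤ)) = (-(n : ℤ)) - 1 := by push_cast; ring
      rw [hcast, zpow_pred_apply]
    rw [he]
    exact (hc'.tendsto s).comp hts
  have hfs : f⁻¹ s = s := tendsto_nhds_unique h2 h1
  have hfs' : f s = s := by
    have := congrArg (⇑f) hfs
    rw [Equiv.Perm.apply_inv_self] at this
    exact this.symm
  have hsS : s ∈ S := by
    have h00 : o 0 = a := by simp [ho]; rfl
    have h0 : s ≤ a := h00 ▸ ciInf_le hbdd 0
    have h1 : x ≤ s := le_ciInf fun n => (hcon _).le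
    exact hS.out hx ha ⟨h1, h0⟩
  exact absurd hfs' (ne_of_gt (hmov s hsS))

include hmov hfS hf'S ha in
lemma NN_eq (x : ℝ) (m : ℤ) (h1 : (f ^ m) a ≤ x) (h2 : x < (f ^ (m + 1)) a) :
    NN f a x = m := by
  have hex : ∃ n : ℤ, (f ^ n) a ≤ x ∧ x < (f ^ (n + 1)) a := ⟨m, h1, h2⟩
  rw [NN, dif_pos hex]
  have hspec := hex.choose_spec
  set n := hex.choose
  have hsm := orbit_strictMono hmov hfS hf'S ha
  by_contra hne
  rcases lt_or_gt_of_ne hne with h | h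
  · have : n + 1 ≤ m := by omega
    exact absurd (le_trans (hsm.monotone this) h1) (not_le.mpr hspec.2)
  · have : m + 1 ≤ n := by omega
    exact absurd (le_trans (hsm.monotone this) hspec.1) (not_le.mpr h2)

include hm hS hmov hfS hf'S ha in
lemma NN_spec (hc : Continuous ⇑f) (hc' : Continuous ⇑f⁻¹) (x : ℝ) (hx : x ∈ S) :
    (f ^ (NN f a x)) a ≤ x ∧ x < (f ^ (NN f a x + 1)) a := by
  obtain ⟨lo, hlo⟩ := exists_orbit_le hm hS hmov hfS hf'S ha hc' x hx
  obtain ⟨hi, hhi⟩ := exists_orbit_gt hm hS hmov hfS hf'S ha hc x hx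
  have hsm := orbit_strictMono hmov hfS hf'S ha
  obtain ⟨lub, hP, hlub⟩ := Int.exists_greatest_of_bdd
    (P := fun n => (f ^ n) a ≤ x)
    ⟨hi, fun z hz => by
      by_contra hgt
      push_neg at hgt
      exact absurd (le_trans (hsm.monotone (by omega)) hz) (not_le.mpr hhi)⟩ ⟨lo, hlo⟩
  have h2 : x < (f ^ (lub + 1)) a := by
    by_contra hle
    push_neg at hle
    have := hlub _ hle
    omega
  rw [NN_eq hmov hfS hf'S ha x lub hP h2]
  exact ⟨hP, h2⟩

include hm hS hmov hfS hf'S ha in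
lemma NN_apply_f (hc : Continuous ⇑f) (hc' : Continuous ⇑f⁻¹) (x : ℝ) (hx : x ∈ S) :
    NN f a (f x) = NN f a x + 1 := by
  obtain ⟨h1, h2⟩ := NN_spec hm hS hmov hfS hf'S ha hc hc' x hx
  set m := NN f a x
  apply NN_eq hmov hfS hf'S ha
  · rw [zpow_succ_apply]
    exact hm.monotone h1
  · rw [show (m + 1 + 1) = (m + 1) + 1 by ring, zpow_succ_apply]
    exact hm h2

include hm hS hmov hfS hf'S ha in
lemma psi_apply_f (hc : Continuous ⇑f) (hc' : Continuous ⇑f⁻¹) (x : ℝ) (hx : x ∈ S) :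
    psi f a (f x) = psi f a x + 1 := by
  have hN := NN_apply_f hm hS hmov hfS hf'S ha hc hc' x hx
  rw [psi, psi, hN]
  have harg : (f ^ (-(NN f a x + 1))) (f x) = (f ^ (-(NN f a x))) x := by
    have : ((f ^ (-(NN f a x + 1))) (f x)) = (f ^ (-(NN f a x + 1))) ((f ^ (1:ℤ)) x) := by
      norm_num
    rw [this, zpow_apply_zpow]
    congr 1
    ring
  rw [harg]
  push_cast
  ring

include hm hmov ha in
lemma fa_sub_pos : 0 < f a - a := by
  have := hmov a ha
  linarith

include hm hS hmov hfS hf'S ha in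
lemma frac_bounds (hc : Continuous ⇑f) (hc' : Continuous ⇑f⁻¹) (x : ℝ) (hx : x ∈ S) :
    a ≤ (f ^ (-(NN f a x))) x ∧ (f ^ (-(NN f a x))) x < f a := by
  obtain ⟨h1, h2⟩ := NN_spec hm hS hmov hfS hf'S ha hc hc' x hx
  set m := NN f a x
  have hzm := strictMono_zpow hm (-m)
  constructor
  · have := hzm.monotone h1
    rwa [zpow_neg_cancel_apply] at this
  · have := hzm h2
    rw [zpow_apply_zpow] at this
    rw [show (-m + (m + 1)) = (1:ℤ) by ring] at this
    simpa using this

include hm hS hmov hfS hf'S ha in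
lemma psi_strictMonoOn (hc : Continuous ⇑f) (hc' : Continuous ⇑f⁻¹) :
    StrictMonoOn (psi f a) S := by
  intro x hx y hy hxy
  have hfa := fa_sub_pos hm hmov ha
  obtain ⟨hx1, hx2⟩ := NN_spec hm hS hmov hfS hf'S ha hc hc' x hx
  obtain ⟨hy1, hy2⟩ := NN_spec hm hS hmov hfS hf'S ha hc hc' y hy
  obtain ⟨hfx1, hfx2⟩ := frac_bounds hm hS hmov hfS hf'S ha hc hc' x hx
  obtain ⟨hfy1, hfy2⟩ := frac_bounds hm hS hmov hfS hf'S ha hc hc' y hy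
  set m := NN f a x with hmdef
  set n := NN f a y with hndef
  have hsm := orbit_strictMono hmov hfS hf'S ha
  have hmn : m ≤ n := by
    by_contra hcon
    push_neg at hcon
    have : n + 1 ≤ m := by omega
    have := hsm.monotone this
    linarith
  rcases eq_or_lt_of_le hmn with heq | hlt
  · rw [psi, psi, ← hmdef, ← hndef, ← heq]
    have hlt := (strictMono_zpow hm (-m)) hxy
    have hdiv : ((f ^ (-m)) x - a) / (f a - a) < ((f ^ (-m)) y - a) / (f a - a) := by
      rw [div_lt_div_iff₀ hfa hfa]
      nlinarith
    linarith
  · rw [psi, psi, ← hmdef, ← hndef]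
    have hxlt : ((f ^ (-m)) x - a) / (f a - a) < 1 := by
      rw [div_lt_one hfa]
      linarith
    have hyge : 0 ≤ ((f ^ (-n)) y - a) / (f a - a) := by
      apply div_nonneg _ hfa.le
      linarith
    have : (m : ℝ) + 1 ≤ (n : ℝ) := by exact_mod_cast hlt
    linarith

include hm hS hmov hfS hf'S ha in
lemma psiInv_mem_psi (t : ℝ) :
    psiInv f a t ∈ S ∧ psi f a (psiInv f a t) = t := by
  have hfa := fa_sub_pos hm hmov ha
  set n := ⌊t⌋ with hn
  set r := t - n with hr
  have hr0 : 0 ≤ r := by rw [hr]; have := Int.floor_le t; linarith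
  have hr1 : r < 1 := by rw [hr]; have := Int.lt_floor_add_one t; linarith
  set w := a + r * (f a - a) with hw
  have hwa : a ≤ w := by nlinarith
  have hwfa : w < f a := by nlinarith
  have hwS : w ∈ S := hS.out ha (hfS a ha) ⟨hwa, hwfa.le⟩
  have hmem : psiInv f a t ∈ S := zpow_mem' hfS hf'S n w hwS
  refine ⟨hmem, ?_⟩
  have hNN : NN f a ((f ^ n) w) = n := by
    apply NN_eq hmov hfS hf'S ha
    · exact (strictMono_zpow hm n).monotone hwa
    · rw [zpow_add_one, Equiv.Perm.mul_apply]
      exact (strictMono_zpow hm n) hwfa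
  rw [psiInv, ← hn, ← hw, psi, hNN, zpow_neg_cancel_apply]
  rw [hw]
  have harr : a + r * (f a - a) - a = r * (f a - a) := by ring
  rw [harr, mul_div_assoc, div_self (ne_of_gt hfa), mul_one, hr]
  ring

include hm hS hmov hfS hf'S ha in
lemma psiInv_psi (hc : Continuous ⇑f) (hc' : Continuous ⇑f⁻¹) (x : ℝ) (hx : x ∈ S) :
    psiInv f a (psi f a x) = x := by
  have hfa := fa_sub_pos hm hmov ha
  obtain ⟨hfx1, hfx2⟩ := frac_bounds hm hS hmov hfS hf'S ha hc hc' x hx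
  set m := NN f a x with hmdef
  set r := ((f ^ (-m)) x - a) / (f a - a) with hrdef
  have hr0 : 0 ≤ r := by apply div_nonneg _ hfa.le; linarith
  have hr1 : r < 1 := by rw [hrdef, div_lt_one hfa]; linarith
  have hfloor : ⌊psi f a x⌋ = m := by
    rw [psi, ← hmdef, ← hrdef]
    rw [Int.floor_eq_iff]
    refine ⟨by push_cast; linarith, by push_cast; linarith⟩
  rw [psiInv, hfloor]
  have : (psi f a x - m) = r := by rw [psi, ← hmdef, ← hrdef]; ring
  rw [this]
  have hwx : a + r * (f a - a) = (f ^ (-m)) x := by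
    rw [hrdef]
    field_simp
    ring
  rw [hwx, zpow_cancel_neg_apply]

end Builder

/-- bundled hypotheses for the fundamental-domain parametrization -/
structure Good (u : Equiv.Perm ℝ) (S : Set ℝ) (a : ℝ) : Prop where
  hm : StrictMono ⇑u
  hS : S.OrdConnected
  hmov : ∀ x ∈ S, x < u x
  hfS : ∀ x ∈ S, u x ∈ S
  hf'S : ∀ x ∈ S, u⁻¹ x ∈ S
  ha : a ∈ S

namespace Good

variable {u : Equiv.Perm ℝ} {S : Set ℝ} {a : ℝ} (G : Good u S a)
include G

lemma hc : Continuous ⇑u := continuous_of_strictMono u G.hm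

lemma hminv : StrictMono ⇑u⁻¹ := symm_strictMono G.hm

lemma hc' : Continuous ⇑u⁻¹ := continuous_of_strictMono u⁻¹ G.hminv

lemma psi_f {x : ℝ} (hx : x ∈ S) : psi u a (u x) = psi u a x + 1 :=
  psi_apply_f G.hm G.hS G.hmov G.hfS G.hf'S G.ha G.hc G.hc' x hx

lemma psi_mono : StrictMonoOn (psi u a) S :=
  psi_strictMonoOn G.hm G.hS G.hmov G.hfS G.hf'S G.ha G.hc G.hc'

lemma inv_mem (t : ℝ) : psiInv u a t ∈ S :=
  (psiInv_mem_psi G.hm G.hS G.hmov G.hfS G.hf'S G.ha t).1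

lemma psi_psiInv (t : ℝ) : psi u a (psiInv u a t) = t :=
  (psiInv_mem_psi G.hm G.hS G.hmov G.hfS G.hf'S G.ha t).2

lemma psiInv_psi {x : ℝ} (hx : x ∈ S) : psiInv u a (psi u a x) = x :=
  Stmt17.psiInv_psi G.hm G.hS G.hmov G.hfS G.hf'S G.ha G.hc G.hc' x hx

lemma psiInv_mono {t s : ℝ} (h : t < s) : psiInv u a t < psiInv u a s := by
  by_contra hcon
  push_neg at hcon
  have := G.psi_mono.monotoneOn (G.inv_mem s) (G.inv_mem t) hcon
  rw [G.psi_psiInv, G.psi_psiInv] at this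
  linarith

lemma u_psiInv (t : ℝ) : u (psiInv u a t) = psiInv u a (t + 1) := by
  have h1 : u (psiInv u a t) ∈ S := G.hfS _ (G.inv_mem t)
  have h2 : psi u a (u (psiInv u a t)) = t + 1 := by
    rw [G.psi_f (G.inv_mem t), G.psi_psiInv]
  have := G.psiInv_psi h1
  rw [h2] at this
  exact this.symm

lemma uinv_psiInv (t : ℝ) : u⁻¹ (psiInv u a t) = psiInv u a (t - 1) := by
  have := G.u_psiInv (t - 1)
  rw [sub_add_cancel] at this
  rw [← this, Equiv.Perm.inv_apply_self]

lemma psi_uinv {x : ℝ} (hx : x ∈ S) : psi u a (u⁻¹ x) = psi u a x - 1 := by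
  have h1 : u⁻¹ x ∈ S := G.hf'S _ hx
  have := G.psi_f h1
  rw [Equiv.Perm.apply_inv_self] at this
  linarith

end Good

section Components

def mov (f : Equiv.Perm ℝ) : Set ℝ := {x | f x ≠ x}

noncomputable def II (f : Equiv.Perm ℝ) (x : ℝ) : Set ℝ := connectedComponentIn (mov f) x

open scoped Classical in
noncomputable def bp (S : Set ℝ) : ℝ := if h : S.Nonempty then h.some else 0

noncomputable def aa (f : Equiv.Perm ℝ) (x : ℝ) : ℝ := bp (II f x)

noncomputable def uu (f : Equiv.Perm ℝ) (x : ℝ) : Equiv.Perm ℝ :=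
  if aa f x < f (aa f x) then f else f⁻¹

variable {f : Equiv.Perm ℝ} (hm : StrictMono ⇑f)

lemma mem_II {x : ℝ} (hx : f x ≠ x) : x ∈ II f x := mem_connectedComponentIn hx

lemma II_subset (x : ℝ) : II f x ⊆ mov f := connectedComponentIn_subset _ _

lemma II_ordConnected (x : ℝ) : (II f x).OrdConnected :=
  isPreconnected_connectedComponentIn.ordConnected

lemma II_eq_of_mem {x y : ℝ} (hy : y ∈ II f x) : II f x = II f y := connectedComponentIn_eq hy

include hm in
/-- all points of a component move the same direction -/
lemma sign_const {x y : ℝ} (hx : f x ≠ x) (hy : y ∈ II f x) : x < f x ↔ y < f y := by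
  have hyy : f y ≠ y := II_subset x hy
  have hcont : ContinuousOn (fun t => f t - t) (uIcc x y) :=
    ((continuous_of_strictMono f hm).sub continuous_id).continuousOn
  constructor
  · intro h
    by_contra hcon
    push_neg at hcon
    have hylt : f y < y := lt_of_le_of_ne hcon hyy
    have h0 : (0 : ℝ) ∈ uIcc (f x - x) (f y - y) := by
      rw [Set.mem_uIcc]
      right
      constructor <;> linarith
    obtain ⟨z, hz, hz0⟩ := intermediate_value_uIcc hcont h0
    have hzI : z ∈ II f x := (II_ordConnected x).uIcc_subset (mem_II hx) hy hz
    have hzz : f z ≠ z := II_subset x hzI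
    apply hzz
    have hz0' : f z - z = 0 := hz0
    linarith
  · intro h
    by_contra hcon
    push_neg at hcon
    have hxlt : f x < x := lt_of_le_of_ne hcon hx
    have h0 : (0 : ℝ) ∈ uIcc (f x - x) (f y - y) := by
      rw [Set.mem_uIcc]
      left
      constructor <;> linarith
    obtain ⟨z, hz, hz0⟩ := intermediate_value_uIcc hcont h0
    have hzI : z ∈ II f x := (II_ordConnected x).uIcc_subset (mem_II hx) hy hz
    have hzz : f z ≠ z := II_subset x hzI
    apply hzz
    have hz0' : f z - z = 0 := hz0
    linarith

include hm in
lemma apply_mem_II {x : ℝ} (hx : f x ≠ x) : f x ∈ II f x := by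
  have hsub : uIcc x (f x) ⊆ mov f := by
    intro z hz
    rw [Set.mem_uIcc] at hz
    intro hzfix
    rcases lt_or_gt_of_ne hx with h | h
    · -- f x < x
      rcases hz with ⟨h1, h2⟩ | ⟨h1, h2⟩
      · -- x ≤ z ≤ f x, but f x < x: impossible unless x = z...
        linarith
      · -- f x ≤ z ≤ x
        have : z < x ∨ z = x := lt_or_eq_of_le h2
        rcases this with hlt | heq
        · have := hm hlt
          rw [hzfix] at this
          linarith
        · rw [heq] at hzfix; exact hx hzfix
    · rcases hz with ⟨h1, h2⟩ | ⟨h1, h2⟩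
      · have : x < z ∨ x = z := lt_or_eq_of_le h1
        rcases this with hlt | heq
        · have := hm hlt
          rw [hzfix] at this
          linarith
        · rw [← heq] at hzfix; exact hx hzfix
      · linarith
  have : uIcc x (f x) ⊆ II f x :=
    isPreconnected_uIcc.subset_connectedComponentIn (Set.left_mem_uIcc) hsub
  exact this Set.right_mem_uIcc

include hm in
lemma inv_apply_mem_II {x : ℝ} (hx : f x ≠ x) : f⁻¹ x ∈ II f x := by
  have hx' : f (f⁻¹ x) ≠ f⁻¹ x := by
    rw [Equiv.Perm.apply_inv_self]
    intro hcon
    apply hx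
    nth_rewrite 1 [hcon]
    rw [Equiv.Perm.apply_inv_self]
  have h1 : x ∈ II f (f⁻¹ x) := by
    have := apply_mem_II hm hx'
    rwa [Equiv.Perm.apply_inv_self] at this
  have h2 : II f (f⁻¹ x) = II f x := II_eq_of_mem h1
  rw [← h2]
  exact mem_II hx'

include hm in
lemma maps_II {x : ℝ} (hx : f x ≠ x) : ∀ y ∈ II f x, f y ∈ II f x ∧ f⁻¹ y ∈ II f x := by
  intro y hy
  have himg : f '' (II f x) ⊆ II f x := by
    have hpre : IsPreconnected (f '' (II f x)) :=
      isPreconnected_connectedComponentIn.image _ (continuous_of_strictMono f hm).continuousOn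
    have hsub : f '' (II f x) ⊆ mov f := by
      rintro _ ⟨z, hz, rfl⟩
      have hz' : f z ≠ z := II_subset x hz
      intro hcon
      exact hz' (f.injective hcon)
    have hmem : f x ∈ f '' (II f x) := ⟨x, mem_II hx, rfl⟩
    have := hpre.subset_connectedComponentIn hmem hsub
    rwa [← connectedComponentIn_eq (apply_mem_II hm hx)] at this
  have himg' : ⇑(f⁻¹) '' (II f x) ⊆ II f x := by
    have hpre : IsPreconnected (⇑(f⁻¹) '' (II f x)) :=
      isPreconnected_connectedComponentIn.image _
        (continuous_of_strictMono f⁻¹ (symm_strictMono hm)).continuousOn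
    have hsub : ⇑(f⁻¹) '' (II f x) ⊆ mov f := by
      rintro _ ⟨z, hz, rfl⟩
      have hz' : f z ≠ z := II_subset x hz
      intro hcon
      apply hz'
      have := congrArg (⇑f) hcon
      rwa [Equiv.Perm.apply_inv_self] at this
    have hmem : f⁻¹ x ∈ ⇑(f⁻¹) '' (II f x) := ⟨x, mem_II hx, rfl⟩
    have := hpre.subset_connectedComponentIn hmem hsub
    rwa [← connectedComponentIn_eq (inv_apply_mem_II hm hx)] at this
  exact ⟨himg ⟨y, hy, rfl⟩, himg' ⟨y, hy, rfl⟩⟩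

lemma aa_mem {x : ℝ} (hx : f x ≠ x) : aa f x ∈ II f x := by
  rw [aa, bp, dif_pos ⟨x, mem_II hx⟩]
  exact Set.Nonempty.some_mem _

lemma aa_eq_of_mem {x y : ℝ} (hy : y ∈ II f x) : aa f y = aa f x := by
  rw [aa, aa, ← II_eq_of_mem hy]

lemma uu_eq_of_mem {x y : ℝ} (hy : y ∈ II f x) : uu f y = uu f x := by
  rw [uu, uu, aa_eq_of_mem hy]

include hm in
lemma setup {x : ℝ} (hx : f x ≠ x) : Good (uu f x) (II f x) (aa f x) := by
  have haI := aa_mem hx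
  have haM : f (aa f x) ≠ aa f x := II_subset x haI
  constructor
  case hS => exact II_ordConnected x
  case ha => exact haI
  case hm =>
    rw [uu]
    split
    · exact hm
    · exact symm_strictMono hm
  case hmov =>
    intro y hy
    rw [uu]
    split
    case isTrue h =>
      rw [← sign_const hm hx haI] at h
      rw [sign_const hm hx hy] at h
      exact h
    case isFalse h =>
      have hfy : f y < y := by
        have : ¬ (aa f x < f (aa f x)) := h
        have h2 : ¬ (x < f x) := fun hc => this ((sign_const hm hx haI).mp hc)
        have h3 : ¬ (y < f y) := fun hc => h2 ((sign_const hm hx hy).mpr hc)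
        have : f y ≠ y := II_subset x hy
        rcases lt_or_gt_of_ne this with hlt | hgt
        · exact hlt
        · exact absurd hgt h3
      have h5 := symm_strictMono hm hfy
      rw [Equiv.symm_apply_apply] at h5
      exact h5
  case hfS =>
    intro y hy
    rw [uu]
    split
    · exact (maps_II hm hx y hy).1
    · exact (maps_II hm hx y hy).2
  case hf'S =>
    intro y hy
    rw [uu]
    split
    · exact (maps_II hm hx y hy).2
    · rw [inv_inv]
      exact (maps_II hm hx y hy).1

include hm in
lemma uu_cases (x : ℝ) : uu f x = f ∨ uu f x = f⁻¹ := by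
  rw [uu]; split <;> simp

end Components

section Core

variable {f : Equiv.Perm ℝ} {h : ℝ → ℝ}

noncomputable def sgm (f : Equiv.Perm ℝ) (h : ℝ → ℝ) (x : ℝ) : ℝ :=
  if f x = x then h x else psiInv (uu f (h x)) (aa f (h x)) (-(psi (uu f x) (aa f x) x))

lemma sgm_fixed {x : ℝ} (hx : f x = x) : sgm f h x = h x := by rw [sgm, if_pos hx]

lemma sgm_mov {x : ℝ} (hx : f x ≠ x) :
    sgm f h x = psiInv (uu f (h x)) (aa f (h x)) (-(psi (uu f x) (aa f x) x)) := by
  rw [sgm, if_neg hx]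

variable (hm : StrictMono ⇑f) (hha : StrictAnti h) (hhi : Function.Involutive h)
  (hsig0 : ∀ x, f x = x ↔ f (h x) = h x) (hsig1 : ∀ x, x < f x ↔ h x < f (h x))

include hha hhi in
lemma cont_h : Continuous h := by
  have hmono : StrictMono (fun x => -(h x)) := fun a b hab => neg_lt_neg (hha hab)
  have hsurj : Function.Surjective (fun x => -(h x)) := fun y => ⟨h (-y), by
    simp only []
    rw [hhi (-y)]
    ring⟩
  have h1 : Continuous (fun x => -(h x)) := hmono.monotone.continuous_of_surjective hsurj
  have h2 : Continuous (fun x => -(-(h x))) := h1.neg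
  simpa using h2

include hsig0 in
lemma mov_h {x : ℝ} (hx : f x ≠ x) : f (h x) ≠ h x := fun c => hx ((hsig0 x).mpr c)

include hm hha hhi hsig0 in
lemma II_h {x : ℝ} (hx : f x ≠ x) : II f (h x) = h '' II f x := by
  have key : ∀ z : ℝ, f z ≠ z → h '' II f z ⊆ II f (h z) := by
    intro z hz
    have hpre : IsPreconnected (h '' II f z) :=
      isPreconnected_connectedComponentIn.image _ (cont_h hha hhi).continuousOn
    have hsub : h '' II f z ⊆ mov f := by
      rintro _ ⟨w, hw, rfl⟩
      exact mov_h hsig0 (II_subset z hw)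
    have hmem : h z ∈ h '' II f z := ⟨z, mem_II hz, rfl⟩
    exact hpre.subset_connectedComponentIn hmem hsub
  apply Set.Subset.antisymm _ (key x hx)
  have h2 := key (h x) (mov_h hsig0 hx)
  rw [hhi x] at h2
  have h3 := Set.image_mono (f := h) h2
  rw [← Set.image_comp, show h ∘ h = id from funext hhi, Set.image_id] at h3
  exact h3

include hm hha hhi hsig0 hsig1 in
lemma uu_h {x : ℝ} (hx : f x ≠ x) : uu f (h x) = uu f x := by
  have hx' : f (h x) ≠ h x := mov_h hsig0 hx
  have e1 : aa f (h x) < f (aa f (h x)) ↔ h x < f (h x) :=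
    (sign_const hm hx' (aa_mem hx')).symm
  have e2 : h x < f (h x) ↔ x < f x := (hsig1 x).symm
  have e3 : x < f x ↔ aa f x < f (aa f x) := sign_const hm hx (aa_mem hx)
  rw [uu, uu]
  have heq : (aa f (h x) < f (aa f (h x))) ↔ (aa f x < f (aa f x)) := e1.trans (e2.trans e3)
  by_cases hcase : aa f x < f (aa f x)
  · rw [if_pos hcase, if_pos (heq.mpr hcase)]
  · rw [if_neg hcase, if_neg (fun c => hcase (heq.mp c))]

include hm hha hhi hsig0 in
lemma sgm_mov_mem {x : ℝ} (hx : f x ≠ x) : sgm f h x ∈ II f (h x) := by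
  rw [sgm_mov hx]
  exact (setup hm (mov_h hsig0 hx)).inv_mem _

include hm hha hhi hsig0 hsig1 in
lemma sgm_invol : Function.Involutive (sgm f h) := by
  intro x
  by_cases hx : f x = x
  · have hx' : f (h x) = h x := (hsig0 x).mp hx
    rw [sgm_fixed hx, sgm_fixed hx', hhi]
  · have hx' : f (h x) ≠ h x := mov_h hsig0 hx
    have G1 : Good (uu f x) (II f x) (aa f x) := setup hm hx
    have G2 : Good (uu f (h x)) (II f (h x)) (aa f (h x)) := setup hm hx'
    set y := sgm f h x with hy
    have hyI : y ∈ II f (h x) := sgm_mov_mem hm hha hhi hsig0 hx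
    have hymov : f y ≠ y := II_subset _ hyI
    have haay : aa f y = aa f (h x) := aa_eq_of_mem hyI
    have huuy : uu f y = uu f (h x) := uu_eq_of_mem hyI
    have hhyI : h y ∈ II f x := by
      have hmem : h y ∈ h '' II f (h x) := ⟨y, hyI, rfl⟩
      have hII : II f (h (h x)) = h '' II f (h x) := II_h hm hha hhi hsig0 hx'
      rw [hhi x] at hII
      rwa [← hII] at hmem
    have haahy : aa f (h y) = aa f x := aa_eq_of_mem hhyI
    have huuhy : uu f (h y) = uu f x := uu_eq_of_mem hhyI
    rw [sgm_mov hymov, haay, huuy, haahy, huuhy]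
    have hpsiy : psi (uu f (h x)) (aa f (h x)) y = -(psi (uu f x) (aa f x) x) := by
      rw [hy, sgm_mov hx]
      exact G2.psi_psiInv _
    rw [hpsiy, neg_neg]
    exact G1.psiInv_psi (mem_II hx)

include hm hha hhi hsig0 hsig1 in
lemma sgm_conj : ∀ x : ℝ, sgm f h (f x) = f⁻¹ (sgm f h x) := by
  intro x
  by_cases hx : f x = x
  · have hx' : f (h x) = h x := (hsig0 x).mp hx
    rw [hx, sgm_fixed hx]
    have hfi : f⁻¹ (h x) = h x := by
      nth_rewrite 1 [← hx']
      rw [Equiv.Perm.inv_apply_self]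
    rw [hfi]
  · have hx' : f (h x) ≠ h x := mov_h hsig0 hx
    have G1 : Good (uu f x) (II f x) (aa f x) := setup hm hx
    have G2 : Good (uu f (h x)) (II f (h x)) (aa f (h x)) := setup hm hx'
    have hfx : f (f x) ≠ f x := fun c => hx (f.injective c)
    have hfxI : f x ∈ II f x := apply_mem_II hm hx
    have haafx : aa f (f x) = aa f x := aa_eq_of_mem hfxI
    have huufx : uu f (f x) = uu f x := uu_eq_of_mem hfxI
    have hhfxI : h (f x) ∈ II f (h x) := by
      rw [II_h hm hha hhi hsig0 hx]
      exact ⟨f x, hfxI, rfl⟩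
    have haahfx : aa f (h (f x)) = aa f (h x) := aa_eq_of_mem hhfxI
    have huuhfx : uu f (h (f x)) = uu f (h x) := uu_eq_of_mem hhfxI
    have huu : uu f (h x) = uu f x := uu_h hm hha hhi hsig0 hsig1 hx
    rw [sgm_mov hfx, haafx, huufx, haahfx, huuhfx, sgm_mov hx]
    rcases uu_cases hm x with hc | hc
    · rw [huu, hc]
      have hpsif : psi f (aa f x) (f x) = psi f (aa f x) x + 1 := by
        have hp := G1.psi_f (mem_II hx)
        rwa [hc] at hp
      have h4 := G2.uinv_psiInv (-(psi f (aa f x) x))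
      rw [huu, hc] at h4
      rw [hpsif, show -(psi f (aa f x) x + 1) = -(psi f (aa f x) x) - 1 by ring, ← h4]
    · rw [huu, hc]
      have hpsif : psi f⁻¹ (aa f x) (f x) = psi f⁻¹ (aa f x) x - 1 := by
        have hp := G1.psi_uinv (mem_II hx)
        rwa [hc, inv_inv] at hp
      have h4 := G2.u_psiInv (-(psi f⁻¹ (aa f x) x))
      rw [huu, hc] at h4
      rw [hpsif, show -(psi f⁻¹ (aa f x) x - 1) = -(psi f⁻¹ (aa f x) x) + 1 by ring, ← h4]

include hm in
lemma II_lt_of_fixed_gt {x w : ℝ} (hx : f x ≠ x) (hw : f w = w) (hxw : x < w) :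
    ∀ y ∈ II f x, y < w := by
  intro y hy
  by_contra hcon
  push_neg at hcon
  have hmem : w ∈ II f x := (II_ordConnected x).out (mem_II hx) hy ⟨hxw.le, hcon⟩
  exact (II_subset x hmem) hw

include hm in
lemma II_gt_of_fixed_lt {x w : ℝ} (hx : f x ≠ x) (hw : f w = w) (hwx : w < x) :
    ∀ y ∈ II f x, w < y := by
  intro y hy
  by_contra hcon
  push_neg at hcon
  have hmem : w ∈ II f x := (II_ordConnected x).out hy (mem_II hx) ⟨hcon, hwx.le⟩
  exact (II_subset x hmem) hw

include hm hha hhi hsig0 hsig1 in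
lemma sgm_strictAnti : StrictAnti (sgm f h) := by
  intro x z hxz
  by_cases hx : f x = x <;> by_cases hz : f z = z
  · rw [sgm_fixed hx, sgm_fixed hz]
    exact hha hxz
  · rw [sgm_fixed hx]
    have hsz : sgm f h z ∈ II f (h z) := sgm_mov_mem hm hha hhi hsig0 hz
    rw [II_h hm hha hhi hsig0 hz] at hsz
    obtain ⟨y, hyI, hysz⟩ := hsz
    have hlt : x < y := II_gt_of_fixed_lt hm hz hx hxz y hyI
    rw [← hysz]
    exact hha hlt
  · rw [sgm_fixed hz]
    have hsx : sgm f h x ∈ II f (h x) := sgm_mov_mem hm hha hhi hsig0 hx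
    rw [II_h hm hha hhi hsig0 hx] at hsx
    obtain ⟨y, hyI, hysx⟩ := hsx
    have hlt : y < z := II_lt_of_fixed_gt hm hx hz hxz y hyI
    rw [← hysx]
    exact hha hlt
  · by_cases hzI : z ∈ II f x
    · have haaz : aa f z = aa f x := aa_eq_of_mem hzI
      have huuz : uu f z = uu f x := uu_eq_of_mem hzI
      have hhzI : h z ∈ II f (h x) := by
        rw [II_h hm hha hhi hsig0 hx]
        exact ⟨z, hzI, rfl⟩
      have haahz : aa f (h z) = aa f (h x) := aa_eq_of_mem hhzI
      have huuhz : uu f (h z) = uu f (h x) := uu_eq_of_mem hhzI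
      have G1 : Good (uu f x) (II f x) (aa f x) := setup hm hx
      have G2 : Good (uu f (h x)) (II f (h x)) (aa f (h x)) := setup hm (mov_h hsig0 hx)
      rw [sgm_mov hx, sgm_mov hz, haaz, huuz, haahz, huuhz]
      apply G2.psiInv_mono
      have hlt := G1.psi_mono (mem_II hx) hzI hxz
      linarith
    · have hw : ∃ w, x < w ∧ w < z ∧ f w = w := by
        by_contra hcon
        push_neg at hcon
        have hsub : Set.Icc x z ⊆ mov f := by
          intro w hwmem
          rcases eq_or_lt_of_le hwmem.1 with heq | hlt1
          · rw [← heq]; exact hx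
          rcases eq_or_lt_of_le hwmem.2 with heq | hlt2
          · rw [heq]; exact hz
          exact hcon w hlt1 hlt2
        have hsub2 : Set.Icc x z ⊆ II f x :=
          isPreconnected_Icc.subset_connectedComponentIn
            (Set.left_mem_Icc.mpr hxz.le) hsub
        exact hzI (hsub2 (Set.right_mem_Icc.mpr hxz.le))
      obtain ⟨w, hxw, hwz, hwfix⟩ := hw
      have hsx : sgm f h x ∈ II f (h x) := sgm_mov_mem hm hha hhi hsig0 hx
      rw [II_h hm hha hhi hsig0 hx] at hsx
      obtain ⟨y1, hy1I, hy1⟩ := hsx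
      have hsz : sgm f h z ∈ II f (h z) := sgm_mov_mem hm hha hhi hsig0 hz
      rw [II_h hm hha hhi hsig0 hz] at hsz
      obtain ⟨y2, hy2I, hy2⟩ := hsz
      have h1 : y1 < w := II_lt_of_fixed_gt hm hx hwfix hxw y1 hy1I
      have h2 : w < y2 := II_gt_of_fixed_lt hm hz hwfix hwz y2 hy2I
      calc sgm f h z = h y2 := hy2.symm
        _ < h w := hha h2
        _ < h y1 := hha h1
        _ = sgm f h x := hy1

include hm hha hhi hsig0 hsig1 in
lemma core : ∃ σ : Equiv.Perm ℝ, IsHomeo σ ∧ σ * σ = 1 ∧ σ * f * σ = f⁻¹ := by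
  have hinv := sgm_invol hm hha hhi hsig0 hsig1
  refine ⟨hinv.toPerm (sgm f h), ?_, ?_, ?_⟩
  · apply isHomeo_of_strictAnti
    have hcoe : ⇑(hinv.toPerm (sgm f h)) = sgm f h := rfl
    rw [hcoe]
    exact sgm_strictAnti hm hha hhi hsig0 hsig1
  · ext x
    simp only [Equiv.Perm.mul_apply, Equiv.Perm.one_apply]
    exact hinv x
  · ext x
    simp only [Equiv.Perm.mul_apply]
    calc (hinv.toPerm (sgm f h)) (f ((hinv.toPerm (sgm f h)) x))
        = sgm f h (f (sgm f h x)) := rfl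
      _ = f⁻¹ (sgm f h (sgm f h x)) := sgm_conj hm hha hhi hsig0 hsig1 _
      _ = f⁻¹ x := by rw [hinv x]

end Core
section Final

lemma sig_lt_iff {g : ℝ → ℝ} {x y : ℝ} (hs : signature g x = signature g y) :
    x < g x ↔ y < g y := by
  unfold signature at hs
  constructor
  · intro hx
    rw [if_pos hx] at hs
    by_contra hy
    rw [if_neg hy] at hs
    split_ifs at hs <;> norm_num at hs
  · intro hy
    rw [if_pos hy] at hs
    by_contra hx
    rw [if_neg hx] at hs
    split_ifs at hs <;> norm_num at hs

lemma sig_fix_iff {g : ℝ → ℝ} {x y : ℝ} (hs : signature g x = signature g y) :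
    g x = x ↔ g y = y := by
  unfold signature at hs
  constructor
  · intro hx
    rw [if_neg (show ¬ x < g x by rw [hx]; exact lt_irrefl x), if_pos hx] at hs
    by_contra hy
    rw [if_neg hy] at hs
    split_ifs at hs <;> norm_num at hs
  · intro hy
    rw [if_neg (show ¬ y < g y by rw [hy]; exact lt_irrefl y), if_pos hy] at hs
    by_contra hx
    rw [if_neg hx] at hs
    split_ifs at hs <;> norm_num at hs

lemma isHomeo_mul {a b : Equiv.Perm ℝ} (ha : IsHomeo a) (hb : IsHomeo b) : IsHomeo (a * b) := by
  constructor
  · have hco : ⇑(a * b) = ⇑a ∘ ⇑b := rfl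
    rw [hco]
    exact ha.1.comp hb.1
  · have hco : ⇑(a * b).symm = ⇑b.symm ∘ ⇑a.symm := rfl
    rw [hco]
    exact hb.2.comp ha.2

lemma isHomeo_inv {a : Equiv.Perm ℝ} (ha : IsHomeo a) : IsHomeo a⁻¹ := ⟨ha.2, ha.1⟩

lemma isHomeo_one : IsHomeo (1 : Equiv.Perm ℝ) := by
  constructor
  · show Continuous (id : ℝ → ℝ)
    exact continuous_id
  · show Continuous (id : ℝ → ℝ)
    exact continuous_id

lemma isHomeo_neg : IsHomeo (Equiv.neg ℝ) := by
  constructor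
  · show Continuous (fun x : ℝ => -x)
    exact continuous_neg
  · show Continuous ⇑(Equiv.neg ℝ).symm
    have hco : ⇑(Equiv.neg ℝ).symm = fun x : ℝ => -x := rfl
    rw [hco]
    exact continuous_neg

lemma conj_rel {σ f : Equiv.Perm ℝ} (h2 : σ * σ = 1) (h3 : σ * f * σ = f⁻¹) :
    f * σ = σ * f⁻¹ := by
  calc f * σ = (σ * σ) * (f * σ) := by rw [h2, one_mul]
    _ = σ * (σ * f * σ) := by group
    _ = σ * f⁻¹ := by rw [h3]

lemma fixed_point_of_strictAnti (e : Equiv.Perm ℝ) (he : StrictAnti ⇑e) : ∃ p, e p = p := by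
  set a := min (e.symm 1) 0 with hadef
  set b := max (e.symm (-1)) 0 with hbdef
  have hea : 1 ≤ e a := by
    have h1 : a ≤ e.symm 1 := min_le_left _ _
    have h2 := he.antitone h1
    rwa [Equiv.apply_symm_apply] at h2
  have heb : e b ≤ -1 := by
    have h1 : e.symm (-1) ≤ b := le_max_left _ _
    have h2 := he.antitone h1
    rwa [Equiv.apply_symm_apply] at h2
  have ha0 : a ≤ 0 := min_le_right _ _
  have hb0 : 0 ≤ b := le_max_right _ _
  have hab : a ≤ b := le_trans ha0 hb0
  have hcont : ContinuousOn (fun t => e t - t) (Set.Icc a b) :=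
    ((continuous_of_strictAnti e he).sub continuous_id).continuousOn
  have h0mem : (0:ℝ) ∈ Set.Icc (e b - b) (e a - a) := by
    constructor
    · linarith
    · linarith
  obtain ⟨p, _, hp0⟩ := intermediate_value_Icc' hab hcont h0mem
  refine ⟨p, ?_⟩
  have hpp : e p - p = 0 := hp0
  linarith

/-- L1 : (i) implies (ii) -/
lemma i_to_ii (f : Equiv.Perm ℝ) (hfm : StrictMono ⇑f) (σ : Equiv.Perm ℝ)
    (hσ : IsHomeo σ) (h2 : σ * σ = 1) (h3 : σ * f * σ = f⁻¹) :
    ∃ h : Equiv.Perm ℝ, IsHomeo h ∧ StrictAnti ⇑h ∧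
      ∀ x : ℝ, signature (⇑f) x = signature (⇑f) (h x) := by
  rcases strictMono_or_strictAnti σ hσ.1 with hmono | hanti
  · have hσ1 : σ = 1 := eq_one_of_involutive_strictMono hmono h2
    have hff : f = f⁻¹ := by
      rw [hσ1] at h3
      simpa using h3
    have hf1 : f = 1 := eq_one_of_sq_eq_one_strictMono hfm hff
    refine ⟨Equiv.neg ℝ, isHomeo_neg, fun a b hab => by simpa using hab, ?_⟩
    intro x
    rw [hf1]
    simp [signature]
  · refine ⟨σ, hσ, hanti, ?_⟩
    intro x
    have hfs := conj_rel h2 h3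
    have hkey : ∀ y, f (σ y) = σ (f⁻¹ y) := by
      intro y
      have := DFunLike.congr_fun hfs y
      simpa [Equiv.Perm.mul_apply] using this
    have e0 : f⁻¹ x < x ↔ x < f x := by
      constructor
      · intro hlt
        have := hfm hlt
        rwa [Equiv.Perm.apply_inv_self] at this
      · intro hlt
        have := symm_strictMono hfm hlt
        rwa [Equiv.symm_apply_apply] at this
    have e1 : x < f x ↔ σ x < f (σ x) := by
      rw [hkey x, hanti.lt_iff_gt, e0]
    have e2 : f x = x ↔ f (σ x) = σ x := by
      rw [hkey x]
      constructor
      · intro hfix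
        have hxi : f⁻¹ x = x := by
          apply f.injective
          rw [Equiv.Perm.apply_inv_self, hfix]
        rw [hxi]
      · intro hfix
        have hxi : f⁻¹ x = x := σ.injective hfix
        have h6 := congrArg (⇑f) hxi
        rw [Equiv.Perm.apply_inv_self] at h6
        exact h6.symm
    unfold signature
    by_cases hc1 : x < f x
    · rw [if_pos hc1, if_pos (e1.mp hc1)]
    · rw [if_neg hc1, if_neg (fun c => hc1 (e1.mpr c))]
      by_cases hc2 : f x = x
      · rw [if_pos hc2, if_pos (e2.mp hc2)]
      · rw [if_neg hc2, if_neg (fun c => hc2 (e2.mpr c))]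

/-- L2 : (ii) implies (i) -/
lemma ii_to_i (f : Equiv.Perm ℝ) (hfm : StrictMono ⇑f) (e : Equiv.Perm ℝ)
    (hanti : StrictAnti ⇑e) (hs : ∀ x, signature (⇑f) x = signature (⇑f) (e x)) :
    ∃ σ : Equiv.Perm ℝ, IsHomeo σ ∧ σ * σ = 1 ∧ σ * f * σ = f⁻¹ := by
  obtain ⟨p, hp⟩ := fixed_point_of_strictAnti e hanti
  have hsymm_anti : StrictAnti ⇑e.symm := symm_strictAnti hanti
  have hps : e.symm p = p := by
    nth_rewrite 1 [← hp]
    rw [Equiv.symm_apply_apply]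
  set h₀ : ℝ → ℝ := fun x => if p ≤ x then e x else e.symm x with hh
  have hinvol : Function.Involutive h₀ := by
    intro x
    by_cases h1 : p ≤ x
    · have hex : e x ≤ p := by
        have := hanti.antitone h1
        rwa [hp] at this
      simp only [hh]
      rw [if_pos h1]
      by_cases hpe : p ≤ e x
      · have hexp : e x = p := le_antisymm hex hpe
        have hxp : x = p := by
          apply e.injective
          rw [hexp, hp]
        rw [if_pos hpe, hexp, hp, hxp]
      · rw [if_neg hpe, Equiv.symm_apply_apply]
    · push_neg at h1
      have hsx : p < e.symm x := by
        have := hsymm_anti h1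
        rwa [hps] at this
      simp only [hh]
      rw [if_neg (not_le.mpr h1), if_pos hsx.le, Equiv.apply_symm_apply]
  have hanti₀ : StrictAnti h₀ := by
    intro x y hxy
    simp only [hh]
    by_cases h1 : p ≤ x
    · rw [if_pos h1, if_pos (le_trans h1 hxy.le)]
      exact hanti hxy
    · push_neg at h1
      rw [if_neg (not_le.mpr h1)]
      have hsx : p < e.symm x := by
        have := hsymm_anti h1
        rwa [hps] at this
      by_cases h2 : p ≤ y
      · rw [if_pos h2]
        have hey : e y ≤ p := by
          have := hanti.antitone h2
          rwa [hp] at this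
        linarith
      · push_neg at h2
        rw [if_neg (not_le.mpr h2)]
        exact hsymm_anti hxy
  have E0 : ∀ x, f x = x ↔ f (e x) = e x := fun x => sig_fix_iff (hs x)
  have E1 : ∀ x, x < f x ↔ e x < f (e x) := fun x => sig_lt_iff (hs x)
  have E0' : ∀ x, f x = x ↔ f (e.symm x) = e.symm x := by
    intro x
    have h4 := E0 (e.symm x)
    rw [Equiv.apply_symm_apply] at h4
    exact h4.symm
  have E1' : ∀ x, x < f x ↔ e.symm x < f (e.symm x) := by
    intro x
    have h4 := E1 (e.symm x)
    rw [Equiv.apply_symm_apply] at h4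
    exact h4.symm
  have hsig0 : ∀ x, f x = x ↔ f (h₀ x) = h₀ x := by
    intro x
    simp only [hh]
    split_ifs
    · exact E0 x
    · exact E0' x
  have hsig1 : ∀ x, x < f x ↔ h₀ x < f (h₀ x) := by
    intro x
    simp only [hh]
    split_ifs
    · exact E1 x
    · exact E1' x
  exact core hfm hanti₀ hinvol hsig0 hsig1

/-- conjugating a decreasing involution to the negation map -/
lemma conj_to_neg {s : Equiv.Perm ℝ} (hs : StrictAnti ⇑s) (h2 : s * s = 1) :
    ∃ k : Equiv.Perm ℝ, IsHomeo k ∧ ∀ x, k (s x) = -(k x) := by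
  obtain ⟨p, hp⟩ := fixed_point_of_strictAnti s hs
  have hinvol : ∀ x, s (s x) = x := by
    intro x
    have := DFunLike.congr_fun h2 x
    simpa [Equiv.Perm.mul_apply] using this
  classical
  set k : Equiv.Perm ℝ :=
    { toFun := fun x => if p ≤ x then x - p else p - s x
      invFun := fun y => if 0 ≤ y then y + p else s (p - y)
      left_inv := by
        intro x
        by_cases h1 : p ≤ x
        · simp only [if_pos h1, if_pos (by linarith : (0:ℝ) ≤ x - p)]
          ring
        · push_neg at h1
          have hsx : p < s x := by
            have := hs h1
            rwa [hp] at this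
          simp only [if_neg (not_le.mpr h1), if_neg (by push_neg; linarith : ¬ (0:ℝ) ≤ p - s x)]
          rw [show p - (p - s x) = s x by ring, hinvol]
      right_inv := by
        intro y
        by_cases h1 : (0:ℝ) ≤ y
        · simp only [if_pos h1, if_pos (by linarith : p ≤ y + p)]
          ring
        · push_neg at h1
          have hpy : p < p - y := by linarith
          have hsy : s (p - y) < p := by
            have := hs hpy
            rwa [hp] at this
          simp only [if_neg (not_le.mpr h1), if_neg (not_le.mpr hsy)]
          rw [hinvol]
          ring } with hk
  have hkco : ∀ x, k x = if p ≤ x then x - p else p - s x := fun x => rfl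
  have hkmono : StrictMono ⇑k := by
    intro x y hxy
    rw [hkco, hkco]
    by_cases h1 : p ≤ x
    · rw [if_pos h1, if_pos (le_trans h1 hxy.le)]
      linarith
    · push_neg at h1
      have hsx : p < s x := by
        have := hs h1
        rwa [hp] at this
      rw [if_neg (not_le.mpr h1)]
      by_cases h2 : p ≤ y
      · rw [if_pos h2]
        linarith
      · push_neg at h2
        rw [if_neg (not_le.mpr h2)]
        have := hs hxy
        linarith
  refine ⟨k, isHomeo_of_strictMono k hkmono, ?_⟩
  intro x
  rw [hkco, hkco]
  by_cases h1 : p ≤ x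
  · have hsx : s x ≤ p := by
      have := hs.antitone h1
      rwa [hp] at this
    by_cases h2 : p ≤ s x
    · have hsxp : s x = p := le_antisymm hsx h2
      have hxp : x = p := by
        apply s.injective
        rw [hsxp, hp]
      rw [if_pos h2, if_pos h1, hsxp, hxp]
      ring
    · rw [if_neg h2, if_pos h1, hinvol]
      ring
  · push_neg at h1
    have hsx : p < s x := by
      have := hs h1
      rwa [hp] at this
    rw [if_pos hsx.le, if_neg (not_le.mpr h1)]
    ring

/-- L3 : (i) implies (iii) -/
lemma i_to_iii (f : Equiv.Perm ℝ) (hfm : StrictMono ⇑f) (σ : Equiv.Perm ℝ)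
    (hσ : IsHomeo σ) (h2 : σ * σ = 1) (h3 : σ * f * σ = f⁻¹) :
    ∃ k : Equiv.Perm ℝ, IsHomeo k ∧
      ∀ x : ℝ, -((k * f * k⁻¹) (-x)) = (k * f * k⁻¹)⁻¹ x := by
  rcases strictMono_or_strictAnti σ hσ.1 with hmono | hanti
  · have hσ1 : σ = 1 := eq_one_of_involutive_strictMono hmono h2
    have hff : f = f⁻¹ := by
      rw [hσ1] at h3
      simpa using h3
    have hf1 : f = 1 := eq_one_of_sq_eq_one_strictMono hfm hff
    refine ⟨1, isHomeo_one, ?_⟩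
    intro x
    rw [hf1]
    simp
  · obtain ⟨k, hk, hconj⟩ := conj_to_neg hanti h2
    refine ⟨k, hk, ?_⟩
    intro x
    have hfs := conj_rel h2 h3
    have hginv : (k * f * k⁻¹)⁻¹ = k * f⁻¹ * k⁻¹ := by group
    rw [hginv]
    simp only [Equiv.Perm.mul_apply]
    have e1 : k⁻¹ (-x) = σ (k⁻¹ x) := by
      apply k.injective
      have h5 : (k : Equiv.Perm ℝ) (k⁻¹ (-x)) = -x := Equiv.Perm.apply_inv_self k (-x)
      rw [h5, hconj (k⁻¹ x), Equiv.Perm.apply_inv_self]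
    rw [e1]
    have e2 : f (σ (k⁻¹ x)) = σ (f⁻¹ (k⁻¹ x)) := by
      have := DFunLike.congr_fun hfs (k⁻¹ x)
      simpa [Equiv.Perm.mul_apply] using this
    rw [e2, hconj (f⁻¹ (k⁻¹ x)), neg_neg]

/-- L4 : (iii) implies (i) -/
lemma iii_to_i (f : Equiv.Perm ℝ) (k : Equiv.Perm ℝ) (hk : IsHomeo k)
    (hp : ∀ x : ℝ, -((k * f * k⁻¹) (-x)) = (k * f * k⁻¹)⁻¹ x) :
    ∃ σ : Equiv.Perm ℝ, IsHomeo σ ∧ σ * σ = 1 ∧ σ * f * σ = f⁻¹ := by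
  set η := Equiv.neg ℝ with hη
  have hη2 : η * η = 1 := by
    ext x
    simp [hη, Equiv.Perm.mul_apply]
  have hg : η * (k * f * k⁻¹) * η = (k * f * k⁻¹)⁻¹ := by
    ext x
    simp only [Equiv.Perm.mul_apply, hη, Equiv.neg_apply]
    exact hp x
  refine ⟨k⁻¹ * η * k, ?_, ?_, ?_⟩
  · exact isHomeo_mul (isHomeo_mul (isHomeo_inv hk) isHomeo_neg) hk
  · calc k⁻¹ * η * k * (k⁻¹ * η * k) = k⁻¹ * (η * η) * k := by group
      _ = 1 := by rw [hη2]; group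
  · calc k⁻¹ * η * k * f * (k⁻¹ * η * k)
        = k⁻¹ * (η * (k * f * k⁻¹) * η) * k := by group
      _ = k⁻¹ * (k * f * k⁻¹)⁻¹ * k := by rw [hg]
      _ = f⁻¹ := by group

/-- L5 : (iii) iff (iv), with the same conjugator -/
lemma iii_iff_iv (g : Equiv.Perm ℝ) :
    (∀ x : ℝ, -(g (-x)) = g⁻¹ x) ↔ (∀ x : ℝ, g (-(g x)) = -x) := by
  constructor
  · intro hp y
    have := hp (g y)
    rw [Equiv.Perm.inv_apply_self] at this
    have h2 := congrArg Neg.neg this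
    simpa using h2
  · intro hp y
    have := hp (-y)
    rw [neg_neg] at this
    have h2 := congrArg (⇑g⁻¹) this
    rwa [Equiv.Perm.inv_apply_self] at h2

end Final
end Stmt17

/-- For a strictly increasing homeomorphism f of ℝ the following are equivalent:
(i) f is strongly reversible in H(ℝ); (ii) Γ_f = Γ_f ∘ h for some strictly decreasing
homeomorphism h; (iii) f is conjugate to a homeomorphism g with η g η = g⁻¹, where
η(x) = -x; (iv) f is conjugate to a homeomorphism whose graph is symmetric across the
line y = -x. -/
theorem stmt_17 (f : Equiv.Perm ℝ) (hf : IsHomeo f) (hfm : StrictMono (⇑f)) :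
    ((∃ σ : Equiv.Perm ℝ, IsHomeo σ ∧ σ * σ = 1 ∧ σ * f * σ = f⁻¹) ↔
      (∃ h : Equiv.Perm ℝ, IsHomeo h ∧ StrictAnti (⇑h) ∧
        ∀ x : ℝ, signature (⇑f) x = signature (⇑f) (h x))) ∧
    ((∃ σ : Equiv.Perm ℝ, IsHomeo σ ∧ σ * σ = 1 ∧ σ * f * σ = f⁻¹) ↔
      (∃ k : Equiv.Perm ℝ, IsHomeo k ∧
        ∀ x : ℝ, -((k * f * k⁻¹) (-x)) = (k * f * k⁻¹)⁻¹ x)) ∧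
    ((∃ σ : Equiv.Perm ℝ, IsHomeo σ ∧ σ * σ = 1 ∧ σ * f * σ = f⁻¹) ↔
      (∃ k : Equiv.Perm ℝ, IsHomeo k ∧
        ∀ x : ℝ, (k * f * k⁻¹) (-((k * f * k⁻¹) x)) = -x)) := by
  refine ⟨⟨?_, ?_⟩, ⟨?_, ?_⟩, ⟨?_, ?_⟩⟩
  · rintro ⟨σ, hσ, h2, h3⟩
    exact Stmt17.i_to_ii f hfm σ hσ h2 h3
  · rintro ⟨h, hh, hanti, hs⟩
    exact Stmt17.ii_to_i f hfm h hanti hs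
  · rintro ⟨σ, hσ, h2, h3⟩
    exact Stmt17.i_to_iii f hfm σ hσ h2 h3
  · rintro ⟨k, hk, hp⟩
    exact Stmt17.iii_to_i f k hk hp
  · rintro ⟨σ, hσ, h2, h3⟩
    obtain ⟨k, hk, hp⟩ := Stmt17.i_to_iii f hfm σ hσ h2 h3
    exact ⟨k, hk, (Stmt17.iii_iff_iv (k * f * k⁻¹)).mp hp⟩
  · rintro ⟨k, hk, hp⟩
    exact Stmt17.iii_to_i f k hk ((Stmt17.iii_iff_iv (k * f * k⁻¹)).mpr hp)
end

section
/- Suppose f ∈ PLF(ℝ) can be written as a composite of finitely many involutions belonging to PLF(ℝ). Then the leftmost and rightmost gradients of f satisfy γ_R(f) · γ_L(f) = 1; that is, if there are real numbers a_L, b_L, a_R, b_R and M > 0 with f(x) = a_L·x + b_L for all x ≤ −M and f(x) = a_R·x + b_R for all x ≥ M, then a_R · a_L = 1. In particular, the map x ↦ 2x is not a composite of finitely many involutions of PLF(ℝ). -/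
/-- `f` is locally affine at `x`: it agrees with an affine map on a neighbourhood of `x`. -/
def IsLocallyAffineAt (f : ℝ → ℝ) (x : ℝ) : Prop :=
  ∃ a b : ℝ, ∀ᶠ y in nhds x, f y = a * y + b

/-- Membership in PLF(ℝ): a homeomorphism of `ℝ` that is locally affine at all but
finitely many points. -/
def InPLF (f : Equiv.Perm ℝ) : Prop :=
  IsHomeo f ∧ {x : ℝ | ¬ IsLocallyAffineAt (⇑f) x}.Finite

/-- Membership in PL(ℝ): a homeomorphism of `ℝ` whose set of points of non-local-affinity
has no accumulation point in `ℝ`. -/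
def InPL (f : Equiv.Perm ℝ) : Prop :=
  IsHomeo f ∧ ∀ x : ℝ, ¬ AccPt x (Filter.principal {y : ℝ | ¬ IsLocallyAffineAt (⇑f) y})

open Filter Set

/-- `f` is eventually affine with gradient `a` near `+∞`. -/
def GradR (f : ℝ → ℝ) (a : ℝ) : Prop := ∃ b : ℝ, ∀ᶠ x in atTop, f x = a * x + b

/-- `f` is eventually affine with gradient `a` near `-∞`. -/
def GradL (f : ℝ → ℝ) (a : ℝ) : Prop := ∃ b : ℝ, ∀ᶠ x in atBot, f x = a * x + b

lemma affine_eq_of_eventually {a b a' b' x : ℝ}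
    (h : ∀ᶠ y in nhds x, a * y + b = a' * y + b') : a = a' ∧ b = b' := by
  rw [Metric.eventually_nhds_iff] at h
  obtain ⟨ε, hε, h⟩ := h
  have h1 : a * x + b = a' * x + b' := h (by simpa using hε)
  have h2 : a * (x + ε / 2) + b = a' * (x + ε / 2) + b' := by
    refine h ?_
    rw [Real.dist_eq, add_sub_cancel_left, abs_of_pos (by linarith)]
    linarith
  have key : (a - a') * (ε / 2) = 0 := by linear_combination h2 - h1
  have ha : a = a' := by
    rcases mul_eq_zero.1 key with hk | hk
    · linarith [sub_eq_zero.1 hk]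
    · linarith
  refine ⟨ha, ?_⟩
  rw [ha] at h1
  linarith

lemma GradR.unique {f : ℝ → ℝ} {a a' : ℝ} (h : GradR f a) (h' : GradR f a') : a = a' := by
  obtain ⟨b, hb⟩ := h
  obtain ⟨b', hb'⟩ := h'
  obtain ⟨C, hC⟩ := eventually_atTop.1 (hb.and hb')
  have h1 := hC C le_rfl
  have h2 := hC (C + 1) (by linarith)
  have e1 : a * C + b = a' * C + b' := by rw [← h1.1, h1.2]
  have e2 : a * (C + 1) + b = a' * (C + 1) + b' := by rw [← h2.1, h2.2]
  linear_combination e2 - e1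

lemma GradL.unique {f : ℝ → ℝ} {a a' : ℝ} (h : GradL f a) (h' : GradL f a') : a = a' := by
  obtain ⟨b, hb⟩ := h
  obtain ⟨b', hb'⟩ := h'
  obtain ⟨C, hC⟩ := eventually_atBot.1 (hb.and hb')
  have h1 := hC C le_rfl
  have h2 := hC (C - 1) (by linarith)
  have e1 : a * C + b = a' * C + b' := by rw [← h1.1, h1.2]
  have e2 : a * (C - 1) + b = a' * (C - 1) + b' := by rw [← h2.1, h2.2]
  linear_combination e1 - e2

lemma GradR.ne_zero {f : ℝ → ℝ} {a : ℝ} (h : GradR f a) (hinj : Function.Injective f) :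
    a ≠ 0 := by
  rintro rfl
  obtain ⟨b, hb⟩ := h
  obtain ⟨C, hC⟩ := eventually_atTop.1 hb
  have h1 : f C = b := by simpa using hC C le_rfl
  have h2 : f (C + 1) = b := by simpa using hC (C + 1) (by linarith)
  have : C = C + 1 := hinj (h1.trans h2.symm)
  linarith

lemma GradL.ne_zero {f : ℝ → ℝ} {a : ℝ} (h : GradL f a) (hinj : Function.Injective f) :
    a ≠ 0 := by
  rintro rfl
  obtain ⟨b, hb⟩ := h
  obtain ⟨C, hC⟩ := eventually_atBot.1 hb
  have h1 : f C = b := by simpa using hC C le_rfl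
  have h2 : f (C - 1) = b := by simpa using hC (C - 1) (by linarith)
  have : C = C - 1 := hinj (h1.trans h2.symm)
  linarith

lemma gradR_comp_pos {f g : ℝ → ℝ} {a c : ℝ} (hf : GradR f a) (hg : GradR g c) (hc : 0 < c) :
    GradR (fun x => f (g x)) (a * c) := by
  obtain ⟨bf, hbf⟩ := hf
  obtain ⟨bg, hbg⟩ := hg
  refine ⟨a * bg + bf, ?_⟩
  have ht : Tendsto (fun x : ℝ => c * x + bg) atTop atTop :=
    tendsto_atTop_add_const_right _ bg ((tendsto_const_mul_atTop_of_pos hc).2 tendsto_id)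
  filter_upwards [hbg, ht.eventually hbf] with x e1 e2
  rw [e1, e2]; ring

lemma gradR_comp_neg {f g : ℝ → ℝ} {a c : ℝ} (hf : GradL f a) (hg : GradR g c) (hc : c < 0) :
    GradR (fun x => f (g x)) (a * c) := by
  obtain ⟨bf, hbf⟩ := hf
  obtain ⟨bg, hbg⟩ := hg
  refine ⟨a * bg + bf, ?_⟩
  have ht : Tendsto (fun x : ℝ => c * x + bg) atTop atBot :=
    tendsto_atBot_add_const_right _ bg ((tendsto_const_mul_atBot_of_neg hc).2 tendsto_id)
  filter_upwards [hbg, ht.eventually hbf] with x e1 e2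
  rw [e1, e2]; ring

lemma gradL_comp_pos {f g : ℝ → ℝ} {a c : ℝ} (hf : GradL f a) (hg : GradL g c) (hc : 0 < c) :
    GradL (fun x => f (g x)) (a * c) := by
  obtain ⟨bf, hbf⟩ := hf
  obtain ⟨bg, hbg⟩ := hg
  refine ⟨a * bg + bf, ?_⟩
  have ht : Tendsto (fun x : ℝ => c * x + bg) atBot atBot :=
    tendsto_atBot_add_const_right _ bg ((tendsto_const_mul_atBot_of_pos hc).2 tendsto_id)
  filter_upwards [hbg, ht.eventually hbf] with x e1 e2
  rw [e1, e2]; ring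

lemma gradL_comp_neg {f g : ℝ → ℝ} {a c : ℝ} (hf : GradR f a) (hg : GradL g c) (hc : c < 0) :
    GradL (fun x => f (g x)) (a * c) := by
  obtain ⟨bf, hbf⟩ := hf
  obtain ⟨bg, hbg⟩ := hg
  refine ⟨a * bg + bf, ?_⟩
  have ht : Tendsto (fun x : ℝ => c * x + bg) atBot atTop :=
    tendsto_atTop_add_const_right _ bg ((tendsto_const_mul_atTop_of_neg hc).2 tendsto_id)
  filter_upwards [hbg, ht.eventually hbf] with x e1 e2
  rw [e1, e2]; ring

/-- A PLF map is eventually affine near `+∞`. -/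
lemma plf_gradR (f : Equiv.Perm ℝ) (hf : InPLF f) : ∃ a : ℝ, GradR (⇑f) a := by
  obtain ⟨-, hfin⟩ := hf
  obtain ⟨N, hN⟩ := hfin.bddAbove
  have haff : ∀ x : ℝ, N < x → IsLocallyAffineAt (⇑f) x := by
    intro x hx
    by_contra hcon
    exact absurd (hN hcon) (not_le.2 hx)
  obtain ⟨a, b, hab⟩ := haff (N + 1) (lt_add_one N)
  refine ⟨a, b, ?_⟩
  set u := {x : ℝ | ∀ᶠ y in nhds x, f y = a * y + b} with hu_def
  set v := {x : ℝ | ∃ a' b' : ℝ, ¬(a' = a ∧ b' = b) ∧ ∀ᶠ y in nhds x, f y = a' * y + b'}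
    with hv_def
  have hu_open : IsOpen u := isOpen_setOf_eventually_nhds
  have hv_open : IsOpen v := by
    rw [isOpen_iff_mem_nhds]
    rintro x ⟨a', b', hne, hev⟩
    have h2 := hev.eventually_nhds
    exact Filter.mem_of_superset h2 (fun y hy => ⟨a', b', hne, hy⟩)
  have hdisj : Disjoint u v := by
    rw [Set.disjoint_left]
    rintro x hxu ⟨a', b', hne, hev⟩
    have hxu' : ∀ᶠ y in nhds x, f y = a * y + b := hxu
    have hcomb : ∀ᶠ y in nhds x, a * y + b = a' * y + b' := by
      filter_upwards [hxu', hev] with y h1 h2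
      rw [← h1, h2]
    obtain ⟨ha, hb⟩ := affine_eq_of_eventually hcomb
    exact hne ⟨ha.symm, hb.symm⟩
  have hsub : Ioi N ⊆ u ∪ v := by
    intro x hx
    obtain ⟨a', b', hev⟩ := haff x hx
    by_cases hh : a' = a ∧ b' = b
    · refine Or.inl ?_
      show ∀ᶠ y in nhds x, f y = a * y + b
      rw [← hh.1, ← hh.2]; exact hev
    · exact Or.inr ⟨a', b', hh, hev⟩
  have hNu : (Ioi N ∩ u).Nonempty := ⟨N + 1, lt_add_one N, hab⟩
  have hfinal := isPreconnected_Ioi.subset_left_of_subset_union hu_open hv_open hdisj hsub hNu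
  rw [eventually_atTop]
  refine ⟨N + 1, fun x hx => ?_⟩
  have hx' : x ∈ u := hfinal (lt_of_lt_of_le (lt_add_one N) hx)
  have hx'' : ∀ᶠ y in nhds x, f y = a * y + b := hx'
  exact hx''.self_of_nhds

/-- A PLF map is eventually affine near `-∞`. -/
lemma plf_gradL (f : Equiv.Perm ℝ) (hf : InPLF f) : ∃ a : ℝ, GradL (⇑f) a := by
  obtain ⟨-, hfin⟩ := hf
  obtain ⟨N, hN⟩ := hfin.bddBelow
  have haff : ∀ x : ℝ, x < N → IsLocallyAffineAt (⇑f) x := by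
    intro x hx
    by_contra hcon
    exact absurd (hN hcon) (not_le.2 hx)
  obtain ⟨a, b, hab⟩ := haff (N - 1) (by linarith)
  refine ⟨a, b, ?_⟩
  set u := {x : ℝ | ∀ᶠ y in nhds x, f y = a * y + b} with hu_def
  set v := {x : ℝ | ∃ a' b' : ℝ, ¬(a' = a ∧ b' = b) ∧ ∀ᶠ y in nhds x, f y = a' * y + b'}
    with hv_def
  have hu_open : IsOpen u := isOpen_setOf_eventually_nhds
  have hv_open : IsOpen v := by
    rw [isOpen_iff_mem_nhds]
    rintro x ⟨a', b', hne, hev⟩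
    have h2 := hev.eventually_nhds
    exact Filter.mem_of_superset h2 (fun y hy => ⟨a', b', hne, hy⟩)
  have hdisj : Disjoint u v := by
    rw [Set.disjoint_left]
    rintro x hxu ⟨a', b', hne, hev⟩
    have hxu' : ∀ᶠ y in nhds x, f y = a * y + b := hxu
    have hcomb : ∀ᶠ y in nhds x, a * y + b = a' * y + b' := by
      filter_upwards [hxu', hev] with y h1 h2
      rw [← h1, h2]
    obtain ⟨ha, hb⟩ := affine_eq_of_eventually hcomb
    exact hne ⟨ha.symm, hb.symm⟩
  have hsub : Iio N ⊆ u ∪ v := by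
    intro x hx
    obtain ⟨a', b', hev⟩ := haff x hx
    by_cases hh : a' = a ∧ b' = b
    · refine Or.inl ?_
      show ∀ᶠ y in nhds x, f y = a * y + b
      rw [← hh.1, ← hh.2]; exact hev
    · exact Or.inr ⟨a', b', hh, hev⟩
  have hNu : (Iio N ∩ u).Nonempty := ⟨N - 1, by simp, hab⟩
  have hfinal := isPreconnected_Iio.subset_left_of_subset_union hu_open hv_open hdisj hsub hNu
  rw [eventually_atBot]
  refine ⟨N - 1, fun x hx => ?_⟩
  have hx' : x ∈ u := hfinal (lt_of_le_of_lt hx (by linarith))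
  have hx'' : ∀ᶠ y in nhds x, f y = a * y + b := hx'
  exact hx''.self_of_nhds

lemma GradR.id : GradR (fun x : ℝ => x) 1 := ⟨0, by filter_upwards with x; ring⟩

lemma GradL.id : GradL (fun x : ℝ => x) 1 := ⟨0, by filter_upwards with x; ring⟩

/-- The key fact about involutions: the product of the two extreme gradients is 1. -/
lemma invol_grad (g : Equiv.Perm ℝ) {aR aL : ℝ} (hR : GradR (⇑g) aR) (hL : GradL (⇑g) aL)
    (h2 : g * g = 1) : aR * aL = 1 := by
  have hcomp : ∀ x : ℝ, g (g x) = x := by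
    intro x
    rw [← Equiv.Perm.mul_apply, h2, Equiv.Perm.one_apply]
  have hid : (fun x : ℝ => g (g x)) = fun x : ℝ => x := funext hcomp
  have haR : aR ≠ 0 := hR.ne_zero g.injective
  have haL : aL ≠ 0 := hL.ne_zero g.injective
  rcases lt_or_gt_of_ne haR with hRneg | hRpos
  · -- aR < 0 : at +∞, g∘g has gradient aL * aR
    have h3 : GradR (fun x => g (g x)) (aL * aR) := gradR_comp_neg hL hR hRneg
    rw [hid] at h3
    have := h3.unique GradR.id
    linarith [this]
  · rcases lt_or_gt_of_ne haL with hLneg | hLpos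
    · -- aL < 0 : at -∞, g∘g has gradient aR * aL
      have h3 : GradL (fun x => g (g x)) (aR * aL) := gradL_comp_neg hR hL hLneg
      rw [hid] at h3
      exact h3.unique GradL.id
    · -- both positive: aR² = 1 and aL² = 1, so both equal 1
      have h3 : GradR (fun x => g (g x)) (aR * aR) := gradR_comp_pos hR hR hRpos
      have h4 : GradL (fun x => g (g x)) (aL * aL) := gradL_comp_pos hL hL hLpos
      rw [hid] at h3 h4
      have e3 : aR * aR = 1 := h3.unique GradR.id
      have e4 : aL * aL = 1 := h4.unique GradL.id
      have : aR = 1 := by nlinarith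
      have : aL = 1 := by nlinarith
      simp_all

/-- Gradients of a product of PLF involutions. -/
lemma prod_grad (L : List (Equiv.Perm ℝ)) (h : ∀ p ∈ L, InPLF p ∧ p * p = 1) :
    ∃ aR aL : ℝ, aR * aL = 1 ∧ GradR (⇑L.prod) aR ∧ GradL (⇑L.prod) aL := by
  induction L with
  | nil =>
    refine ⟨1, 1, one_mul 1, ⟨0, ?_⟩, ⟨0, ?_⟩⟩ <;>
      · filter_upwards with x
        simp [List.prod_nil]
  | cons g t ih =>
    obtain ⟨cR, cL, hc, hcR, hcL⟩ := ih (fun p hp => h p (List.mem_cons_of_mem g hp))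
    obtain ⟨hgPLF, hginv⟩ := h g List.mem_cons_self
    obtain ⟨gR, hgR⟩ := plf_gradR g hgPLF
    obtain ⟨gL, hgL⟩ := plf_gradL g hgPLF
    have hg1 : gR * gL = 1 := invol_grad g hgR hgL hginv
    have key : ⇑(g :: t).prod = fun x => g (t.prod x) := by
      funext x
      rw [List.prod_cons, Equiv.Perm.mul_apply]
    rcases lt_trichotomy cR 0 with hcRn | hcR0 | hcRp
    · have hcLn : cL < 0 := by nlinarith
      refine ⟨gL * cR, gR * cL, ?_, ?_, ?_⟩
      case _ => calc gL * cR * (gR * cL) = (gR * gL) * (cR * cL) := by ring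
                  _ = 1 := by rw [hg1, hc, one_mul]
      · rw [key]; exact gradR_comp_neg hgL hcR hcRn
      · rw [key]; exact gradL_comp_neg hgR hcL hcLn
    · exfalso; rw [hcR0, zero_mul] at hc; exact zero_ne_one hc
    · have hcLp : 0 < cL := by nlinarith
      refine ⟨gR * cR, gL * cL, ?_, ?_, ?_⟩
      · calc gR * cR * (gL * cL) = (gR * gL) * (cR * cL) := by ring
          _ = 1 := by rw [hg1, hc, one_mul]
      · rw [key]; exact gradR_comp_pos hgR hcR hcRp
      · rw [key]; exact gradL_comp_pos hgL hcL hcLp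

/-- If f ∈ PLF(ℝ) is a composite of finitely many involutions of PLF(ℝ), then its
leftmost and rightmost gradients satisfy γ_R(f) · γ_L(f) = 1. -/
theorem stmt_18 (f : Equiv.Perm ℝ) (hf : InPLF f)
    (n : ℕ) (g : Fin n → Equiv.Perm ℝ)
    (hg : ∀ i, InPLF (g i) ∧ g i * g i = 1)
    (hprod : f = (List.ofFn g).prod)
    (aL bL aR bR M : ℝ) (hM : 0 < M)
    (hL : ∀ x : ℝ, x ≤ -M → f x = aL * x + bL)
    (hR : ∀ x : ℝ, M ≤ x → f x = aR * x + bR) :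
    aR * aL = 1 := by
  obtain ⟨AR, AL, hA, hAR, hAL⟩ := prod_grad (List.ofFn g) (by
    intro p hp
    obtain ⟨i, rfl⟩ := List.mem_ofFn.1 hp
    exact hg i)
  rw [← hprod] at hAR hAL
  have hfR : GradR (⇑f) aR := ⟨bR, eventually_atTop.2 ⟨M, hR⟩⟩
  have hfL : GradL (⇑f) aL := ⟨bL, eventually_atBot.2 ⟨-M, hL⟩⟩
  have e1 : aR = AR := hfR.unique hAR
  have e2 : aL = AL := hfL.unique hAL
  rw [e1, e2]
  exact hA
end
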